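/- Let T be a projective cover of L|_N in the category of kN-modules, and let J be the Jacobson radical of kN. Then for every natural number n there exists a kG-module structure on the quotient (JⁿT)/(Jⁿ⁺¹T) which extends its natural kN-module structure (i.e., the composite kN → kG → End_k((JⁿT)/(Jⁿ⁺¹T)) is the natural kN-action) and on which the two-sided ideal I of kG generated by the image of J acts as zero; for n = 0 this structure can be chosen so that T/JT is isomorphic to L as a kG-module. -/

import Mathlib

/-!
STATEMENT 5.  `k` a field, `G` a finite group, `N ⊴ G`; `L` a finite-dimensional
`kG`-module with `L|_N` irreducible.  Let `T` be a projective cover of `L|_N` in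
`kN`-modules and `J` the Jacobson radical of `kN`.  For every `n`, the quotient
`(JⁿT)/(Jⁿ⁺¹T)` carries a `kG`-module structure extending its natural `kN`-module
structure (the composite `kN → kG → End_k((JⁿT)/(Jⁿ⁺¹T))` is the natural `kN`-action)
on which the two-sided ideal `I` of `kG` generated by the image of `J` acts as zero;
for `n = 0` it can be chosen so that `T/JT ≅ L` as `kG`-modules.
-/
open Submodule TensorProduct

noncomputable section

variable (k : Type) [Field k]

/-- `f` intertwines the representations `ρV` and `ρW`. -/
def IsEquivariant {H V W : Type} [Monoid H] [AddCommGroup V] [Module k V]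
    [AddCommGroup W] [Module k W] (ρV : Representation k H V) (ρW : Representation k H W)
    (f : V →ₗ[k] W) : Prop :=
  ∀ (h : H) (v : V), f (ρV h v) = ρW h (f v)

/-- `p` is a subrepresentation (i.e. an `H`-invariant `k`-subspace). -/
def IsSubrep {H V : Type} [Monoid H] [AddCommGroup V] [Module k V]
    (ρ : Representation k H V) (p : Submodule k V) : Prop :=
  ∀ (h : H), ∀ v ∈ p, ρ h v ∈ p

/-- `ρ` is an irreducible representation. -/
def IsIrreducibleRep {H V : Type} [Monoid H] [AddCommGroup V] [Module k V]
    (ρ : Representation k H V) : Prop :=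
  Nontrivial V ∧ ∀ p : Submodule k V, IsSubrep k ρ p → p = ⊥ ∨ p = ⊤

/-- `ρQ` is a projective object in the category of representations of `H` over `k`
(equivalently, of `kH`-modules). -/
def IsProjectiveRep {H Q : Type} [Monoid H] [AddCommGroup Q] [Module k Q]
    (ρQ : Representation k H Q) : Prop :=
  ∀ (A B : Type) [AddCommGroup A] [Module k A] [AddCommGroup B] [Module k B],
    ∀ (ρA : Representation k H A) (ρB : Representation k H B) (f : A →ₗ[k] B),
      IsEquivariant k ρA ρB f → Function.Surjective f →
      ∀ q : Q →ₗ[k] B, IsEquivariant k ρQ ρB q →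
        ∃ l : Q →ₗ[k] A, IsEquivariant k ρQ ρA l ∧ f ∘ₗ l = q

/-- `π : Q → V` is a projective cover in the category of representations of `H`:
`Q` is projective, `π` is a surjective morphism, and its kernel is superfluous
(any subrepresentation `p` with `p + ker π = Q` equals `Q`). -/
def IsProjectiveCover {H Q V : Type} [Monoid H] [AddCommGroup Q] [Module k Q]
    [AddCommGroup V] [Module k V] (ρQ : Representation k H Q) (ρV : Representation k H V)
    (π : Q →ₗ[k] V) : Prop :=
  IsProjectiveRep k ρQ ∧ IsEquivariant k ρQ ρV π ∧ Function.Surjective π ∧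
    ∀ p : Submodule k Q, IsSubrep k ρQ p → p ⊔ LinearMap.ker π = ⊤ → p = ⊤

/-- For `P ⊆ kH` a `k`-subspace and `V` a representation of `H`, the subspace `P·V`. -/
def actSpan {H V : Type} [Monoid H] [AddCommGroup V] [Module k V]
    (ρ : Representation k H V) (P : Submodule k (MonoidAlgebra k H)) : Submodule k V :=
  span k {w : V | ∃ x ∈ P, ∃ v : V, w = ρ.asAlgebraHom x v}

/-- The quotient `k`-module `p/q` (more precisely `p/(q ∩ p)`). -/
abbrev QuotMod {V : Type} [AddCommGroup V] [Module k V] (p q : Submodule k V) : Type :=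
  ↥p ⧸ (Submodule.comap p.subtype q)

/-- `τ` is the representation on `p/q` induced by `ρ`. -/
def IsInducedRep {H V : Type} [Monoid H] [AddCommGroup V] [Module k V]
    (ρ : Representation k H V) (p q : Submodule k V)
    (τ : Representation k H (QuotMod k p q)) : Prop :=
  ∀ (h : H) (v w : ↥p), (w : V) = ρ h (v : V) →
    τ h (Submodule.Quotient.mk v) = Submodule.Quotient.mk w

variable (G : Type) [Group G] [Fintype G] (N : Subgroup G) [N.Normal]

/-- The algebra map `kN →ₐ[k] kG` induced by the inclusion `N ↪ G`. -/
def incl : MonoidAlgebra k ↥N →ₐ[k] MonoidAlgebra k G :=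
  MonoidAlgebra.mapDomainAlgHom k k N.subtype

/-- The Jacobson radical `J` of `kN`, viewed as a `k`-submodule of `kN`. -/
def Jrad : Submodule k (MonoidAlgebra k ↥N) :=
  ((⊥ : Ideal (MonoidAlgebra k ↥N)).jacobson).restrictScalars k

/-- `R`, the image in `kG` of the Jacobson radical of `kN`. -/
def Rimg : Submodule k (MonoidAlgebra k G) :=
  Submodule.map (incl k G N).toLinearMap (Jrad k G N)

/-- `I`, the two-sided ideal of `kG` generated by `R` (as a `k`-submodule this is
`kG * R * kG`, the smallest two-sided ideal containing `R`). -/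
def Igen : Submodule k (MonoidAlgebra k G) :=
  (⊤ : Submodule k (MonoidAlgebra k G)) * Rimg k G N * (⊤ : Submodule k (MonoidAlgebra k G))

/-- `Hom_{kN}(L, M)`: the `N`-equivariant `k`-linear maps, a `k`-subspace of `L →ₗ[k] M`. -/
def NHom (L M : Type) [AddCommGroup L] [Module k L] [AddCommGroup M] [Module k M]
    (ρL : Representation k G L) (ρM : Representation k G M) : Submodule k (L →ₗ[k] M) where
  carrier := {f | ∀ (n : ↥N) (x : L), f (ρL ↑n x) = ρM ↑n (f x)}
  add_mem' := by
    intro f g hf hg n x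
    simp [hf n x, hg n x]
  zero_mem' := by intro n x; simp
  smul_mem' := by
    intro c f hf n x
    simp [hf n x]




/- ------------------------------------------------------------------ -/
/- Auxiliary development                                               -/
/- ------------------------------------------------------------------ -/

namespace S5

section genA
variable {k : Type} [Field k] {H V W : Type} [Monoid H] [AddCommGroup V] [Module k V]
  [AddCommGroup W] [Module k W]

theorem asAlg_equivariant {ρV : Representation k H V} {ρW : Representation k H W}
    {f : V →ₗ[k] W} (hf : IsEquivariant k ρV ρW f) (c : MonoidAlgebra k H) (v : V) :
    f (ρV.asAlgebraHom c v) = ρW.asAlgebraHom c (f v) := by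
  induction c using MonoidAlgebra.induction_on with
  | of g => simp [Representation.asAlgebraHom_of, hf g v]
  | add a b ha hb => simp [map_add, ha, hb]
  | smul r a ha => simp [map_smul, ha]

theorem asAlg_comp {H' : Type} [Monoid H'] (φ : H →* H') (ρ : Representation k H' V)
    (c : MonoidAlgebra k H) :
    ρ.asAlgebraHom (MonoidAlgebra.mapDomainAlgHom k k φ c) =
      Representation.asAlgebraHom (ρ.comp φ) c := by
  induction c using MonoidAlgebra.induction_on with
  | of g =>
      show ρ.asAlgebraHom (MonoidAlgebra.mapDomainAlgHom k k φ (MonoidAlgebra.of k H g)) = _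
      rw [MonoidAlgebra.mapDomainAlgHom_apply, MonoidAlgebra.of_apply, MonoidAlgebra.mapDomain_single,
        Representation.asAlgebraHom_single_one]
      rw [Representation.asAlgebraHom_single_one]
      rfl
  | add a b ha hb => simp only [map_add, ha, hb]
  | smul r a ha => simp only [map_smul, ha]

def oSpan (ρ : Representation k H V) (P : Submodule k (MonoidAlgebra k H))
    (S : Submodule k V) : Submodule k V :=
  span k {w : V | ∃ x ∈ P, ∃ v ∈ S, w = ρ.asAlgebraHom x v}

theorem mem_oSpan {ρ : Representation k H V} {P : Submodule k (MonoidAlgebra k H)}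
    {S : Submodule k V} {x : MonoidAlgebra k H} (hx : x ∈ P) {v : V} (hv : v ∈ S) :
    ρ.asAlgebraHom x v ∈ oSpan ρ P S :=
  subset_span ⟨x, hx, v, hv, rfl⟩

theorem oSpan_induction {ρ : Representation k H V} {P : Submodule k (MonoidAlgebra k H)}
    {S : Submodule k V} {w : V} (hw : w ∈ oSpan ρ P S) {C : V → Prop}
    (mem : ∀ x ∈ P, ∀ v ∈ S, C (ρ.asAlgebraHom x v))
    (zero : C 0) (add : ∀ a b, C a → C b → C (a + b))
    (smul : ∀ (r : k) a, C a → C (r • a)) : C w := by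
  refine span_induction ?_ zero (fun a b _ _ ha hb => add a b ha hb)
    (fun r a _ ha => smul r a ha) hw
  rintro w ⟨x, hx, v, hv, rfl⟩; exact mem x hx v hv

theorem oSpan_mono {ρ : Representation k H V} {P : Submodule k (MonoidAlgebra k H)}
    {S S' : Submodule k V} (h : S ≤ S') : oSpan ρ P S ≤ oSpan ρ P S' := by
  refine span_le.2 ?_
  rintro w ⟨x, hx, v, hv, rfl⟩; exact mem_oSpan hx (h hv)

theorem oSpan_le {ρ : Representation k H V} {P : Submodule k (MonoidAlgebra k H)}
    {S : Submodule k V} {S' : Submodule k V}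
    (h : ∀ x ∈ P, ∀ v ∈ S, ρ.asAlgebraHom x v ∈ S') : oSpan ρ P S ≤ S' := by
  refine span_le.2 ?_
  rintro w ⟨x, hx, v, hv, rfl⟩; exact h x hx v hv

theorem oSpan_mul (ρ : Representation k H V) (P Q : Submodule k (MonoidAlgebra k H))
    (S : Submodule k V) : oSpan ρ (P * Q) S = oSpan ρ P (oSpan ρ Q S) := by
  apply le_antisymm
  · refine oSpan_le fun x hx v hv => ?_
    refine Submodule.mul_induction_on hx (fun a ha b hb => ?_) (fun a b hca hcb => ?_)
    · rw [map_mul]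
      exact mem_oSpan ha (mem_oSpan hb hv)
    · rw [map_add, LinearMap.add_apply]
      exact add_mem hca hcb
  · refine oSpan_le fun x hx v hv => ?_
    refine oSpan_induction (C := fun u => ρ.asAlgebraHom x u ∈ oSpan ρ (P * Q) S) hv
      (fun y hy u hu => ?_) ?_ (fun a b ha hb => ?_) (fun r a ha => ?_)
    · rw [← Module.End.mul_apply, ← map_mul]
      exact mem_oSpan (mul_mem_mul hx hy) hu
    · simp
    · rw [map_add]; exact add_mem ha hb
    · rw [map_smul]; exact smul_mem _ r ha

theorem oSpan_smul_mem {ρ : Representation k H V} {P : Submodule k (MonoidAlgebra k H)}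
    {S : Submodule k V} (hP : ∀ (c : MonoidAlgebra k H), ∀ x ∈ P, c * x ∈ P)
    (c : MonoidAlgebra k H) {w : V} (hw : w ∈ oSpan ρ P S) :
    ρ.asAlgebraHom c w ∈ oSpan ρ P S := by
  refine oSpan_induction (C := fun u => ρ.asAlgebraHom c u ∈ oSpan ρ P S) hw
    (fun y hy u hu => ?_) ?_ (fun a b ha hb => ?_) (fun r a ha => ?_)
  · rw [← Module.End.mul_apply, ← map_mul]
    exact mem_oSpan (hP c y hy) hu
  · simp
  · rw [map_add]; exact add_mem ha hb
  · rw [map_smul]; exact smul_mem _ r ha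

/-- evaluation at `v` as a `k`-linear map on the monoid algebra -/
def evA (ρ : Representation k H V) (v : V) : MonoidAlgebra k H →ₗ[k] V where
  toFun a := ρ.asAlgebraHom a v
  map_add' a b := by
    show ρ.asAlgebraHom (a + b) v = ρ.asAlgebraHom a v + ρ.asAlgebraHom b v
    rw [map_add, LinearMap.add_apply]
  map_smul' r a := by
    show ρ.asAlgebraHom (r • a) v = r • ρ.asAlgebraHom a v
    rw [map_smul, LinearMap.smul_apply]

theorem jac_kills {ρ : Representation k H V} (hirr : IsIrreducibleRep k ρ) :
    ∀ j ∈ (⊥ : Ideal (MonoidAlgebra k H)).jacobson, ∀ v : V, ρ.asAlgebraHom j v = 0 := by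
  intro j hj v
  rcases eq_or_ne v 0 with rfl | hv
  · exact (ρ.asAlgebraHom j).map_zero
  · let ann : Ideal (MonoidAlgebra k H) :=
      { carrier := {a | ρ.asAlgebraHom a v = 0}
        add_mem' := fun {a b} ha hb => by
          show ρ.asAlgebraHom (a + b) v = 0
          rw [map_add, LinearMap.add_apply, ha, hb, add_zero]
        zero_mem' := by show ρ.asAlgebraHom 0 v = 0; rw [map_zero]; rfl
        smul_mem' := fun c a ha => by
          show ρ.asAlgebraHom (c * a) v = 0
          rw [map_mul, Module.End.mul_apply, ha, map_zero] }
    have hann : ∀ a : MonoidAlgebra k H, a ∈ ann ↔ ρ.asAlgebraHom a v = 0 := fun a => Iff.rfl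
    have hmax : ann.IsMaximal := by
      constructor; constructor
      · intro htop
        have : (1 : MonoidAlgebra k H) ∈ ann := htop ▸ trivial
        rw [hann, map_one] at this
        exact hv this
      · intro I hI
        have hsub : IsSubrep k ρ (Submodule.map (evA ρ v) (I.restrictScalars k)) := by
          rintro h w ⟨a, ha, rfl⟩
          refine ⟨MonoidAlgebra.of k H h * a, I.smul_mem _ ha, ?_⟩
          show ρ.asAlgebraHom _ v = ρ h (ρ.asAlgebraHom a v)
          rw [map_mul, Module.End.mul_apply, Representation.asAlgebraHom_of]
        rcases hirr.2 _ hsub with hbot | htop2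
        · exfalso
          obtain ⟨b, hbI, hbann⟩ := SetLike.exists_of_lt hI
          have : evA ρ v b ∈ Submodule.map (evA ρ v) (I.restrictScalars k) := ⟨b, hbI, rfl⟩
          rw [hbot, Submodule.mem_bot] at this
          exact hbann ((hann b).2 this)
        · have hvW : v ∈ Submodule.map (evA ρ v) (I.restrictScalars k) := htop2 ▸ trivial
          obtain ⟨b₀, hb₀, hb₀v⟩ := hvW
          rw [eq_top_iff]
          intro a _
          have h1 : a - a * b₀ ∈ ann := by
            rw [hann, map_sub, LinearMap.sub_apply, map_mul, Module.End.mul_apply]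
            show ρ.asAlgebraHom a v - ρ.asAlgebraHom a (evA ρ v b₀) = 0
            rw [hb₀v, sub_self]
          have h2 : a * b₀ ∈ I := I.smul_mem a hb₀
          have := I.add_mem (hI.le h1) h2
          simpa using this
    have hle : (⊥ : Ideal (MonoidAlgebra k H)).jacobson ≤ ann := sInf_le ⟨bot_le, hmax⟩
    exact (hann j).1 (hle hj)

/-- left multiplication on the big free module `T →₀ A` -/
def lmF (T : Type) (a : MonoidAlgebra k H) :
    (T →₀ MonoidAlgebra k H) →ₗ[k] (T →₀ MonoidAlgebra k H) :=
  Finsupp.mapRange.linearMap (LinearMap.mulLeft k a)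

theorem lmF_apply (T : Type) (a : MonoidAlgebra k H) (z : T →₀ MonoidAlgebra k H) (t : T) :
    lmF (k := k) T a z t = a * z t := by
  simp [lmF, Finsupp.mapRange.linearMap_apply, Finsupp.mapRange_apply]

/-- the free representation on `T →₀ A` -/
def ρF (T : Type) : Representation k H (T →₀ MonoidAlgebra k H) where
  toFun u := lmF T (MonoidAlgebra.of k H u)
  map_one' := by
    refine LinearMap.ext fun z => Finsupp.ext fun t => ?_
    rw [lmF_apply, map_one, one_mul]; rfl
  map_mul' u v := by
    refine LinearMap.ext fun z => Finsupp.ext fun t => ?_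
    rw [lmF_apply, map_mul, mul_assoc]
    show _ = lmF (k := k) T (MonoidAlgebra.of k H u) (lmF (k := k) T (MonoidAlgebra.of k H v) z) t
    rw [lmF_apply, lmF_apply]

theorem ρF_asAlg (T : Type) (c : MonoidAlgebra k H) (z : T →₀ MonoidAlgebra k H) (t : T) :
    ((ρF T).asAlgebraHom c z) t = c * z t := by
  induction c using MonoidAlgebra.induction_on with
  | of g => rw [Representation.asAlgebraHom_of]; exact lmF_apply T _ z t
  | add a b ha hb =>
      rw [map_add, LinearMap.add_apply, Finsupp.add_apply, ha, hb, add_mul]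
  | smul r a ha =>
      rw [map_smul, LinearMap.smul_apply, Finsupp.smul_apply, ha, smul_mul_assoc]

end genA

section kerK
variable {k : Type} [Field k] {H T L : Type} [Monoid H] [AddCommGroup T] [Module k T]
  [AddCommGroup L] [Module k L]

theorem ker_le_JT (ρT : Representation k H T) (ρL' : Representation k H L) (π : T →ₗ[k] L)
    (hcov : IsProjectiveCover k ρT ρL' π) :
    LinearMap.ker π ≤
      oSpan ρT (((⊥ : Ideal (MonoidAlgebra k H)).jacobson).restrictScalars k) ⊤ := by
  classical
  set A := MonoidAlgebra k H with hA
  let fF : (T →₀ A) →ₗ[k] T := Finsupp.lsum k (fun t : T => evA ρT t)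
  have fF_single : ∀ (t : T) (c : A), fF (Finsupp.single t c) = ρT.asAlgebraHom c t := by
    intro t c; simp [fF, evA]
  have fF_apply : ∀ z : T →₀ A, fF z = z.sum fun t c => ρT.asAlgebraHom c t := by
    intro z; simp [fF, Finsupp.lsum_apply, Finsupp.sum, evA]
  have hsurj : Function.Surjective fF := by
    intro t
    exact ⟨Finsupp.single t 1, by rw [fF_single, map_one]; rfl⟩
  have hequi : IsEquivariant k (ρF T) ρT fF := by
    intro u z
    show fF (Finsupp.mapRange (fun c => MonoidAlgebra.of k H u * c) (by simp) z) = _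
    rw [fF_apply, fF_apply]
    rw [Finsupp.sum_mapRange_index (by simp)]
    rw [map_finsuppSum]
    refine Finsupp.sum_congr fun t _ => ?_
    rw [map_mul, Module.End.mul_apply, Representation.asAlgebraHom_of]
  obtain ⟨s, hs_eq, hfs⟩ := hcov.1 (T →₀ A) T (ρF T) ρT fF hequi hsurj LinearMap.id
    (fun h v => rfl)
  intro t ht
  rw [LinearMap.mem_ker] at ht
  have hts : fF (s t) = t := LinearMap.congr_fun hfs t
  by_cases hcase : ∀ t' : T, s t t' ∈ (⊥ : Ideal A).jacobson
  · rw [← hts, fF_apply]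
    refine Submodule.sum_mem _ fun t' _ => ?_
    exact mem_oSpan (hcase t') trivial
  · push_neg at hcase
    obtain ⟨t₀, hc⟩ := hcase
    set c := s t t₀ with hcdef
    have hc' : ¬ ∀ p ∈ {J : Ideal A | ⊥ ≤ J ∧ J.IsMaximal}, c ∈ p :=
      fun h => hc (Submodule.mem_sInf.2 h)
    push_neg at hc'
    obtain ⟨m, hmS, hcm⟩ := hc'
    have hmmax : m.IsMaximal := hmS.2
    let ev0 : (T →₀ A) →ₗ[k] A := Finsupp.lapply t₀
    let p : Submodule k T := Submodule.comap (ev0 ∘ₗ s) (m.restrictScalars k)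
    have hmem_p : ∀ y : T, y ∈ p ↔ (s y) t₀ ∈ m := fun y => Iff.rfl
    have hsubrep : IsSubrep k ρT p := by
      intro u y hy
      rw [hmem_p] at hy ⊢
      rw [hs_eq u y]
      show ((ρF T) u (s y)) t₀ ∈ m
      have : ((ρF T) u (s y)) t₀ = MonoidAlgebra.of k H u * (s y) t₀ := lmF_apply T _ _ _
      rw [this]
      exact m.smul_mem _ hy
    have htp : t ∉ p := by rw [hmem_p]; exact hcm
    have hsup : p ⊔ LinearMap.ker π = ⊤ := by
      have hlt : m < m ⊔ Submodule.span A {c} := by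
        refine lt_of_le_of_ne le_sup_left fun heq => ?_
        exact hcm (heq ▸ (le_sup_right : Submodule.span A {c} ≤ _)
          (Submodule.mem_span_singleton_self c))
      have htop : m ⊔ Submodule.span A {c} = ⊤ := hmmax.1.2 _ hlt
      have h1mem : (1 : A) ∈ m ⊔ Submodule.span A {c} := htop ▸ trivial
      obtain ⟨a, ham, b, hbspan, hab⟩ := Submodule.mem_sup.1 h1mem
      obtain ⟨d, hd⟩ := Submodule.mem_span_singleton.1 hbspan
      rw [eq_top_iff]
      intro z' _
      set cz := (s z') t₀ with hcz
      set y2 := ρT.asAlgebraHom (cz * d) t with hy2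
      have hy2ker : y2 ∈ LinearMap.ker π := by
        rw [LinearMap.mem_ker, hy2, asAlg_equivariant hcov.2.1, ht, map_zero]
      have hy1p : z' - y2 ∈ p := by
        rw [hmem_p, map_sub, Finsupp.sub_apply]
        have hsy2 : (s y2) t₀ = (cz * d) * c := by
          rw [hy2, asAlg_equivariant hs_eq]
          exact ρF_asAlg T _ _ _
        rw [hsy2]
        have h1 : a + d * c = 1 := by rw [← smul_eq_mul, hd]; exact hab
        have h4 : cz * a + cz * (d * c) = cz := by rw [← mul_add, h1, mul_one]
        have h3 : cz - cz * d * c = cz * a := by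
          rw [mul_assoc, sub_eq_iff_eq_add]; exact h4.symm
        rw [h3]
        exact m.smul_mem _ ham
      have : z' = (z' - y2) + y2 := by abel
      rw [this]
      exact Submodule.add_mem_sup hy1p hy2ker
    have := hcov.2.2.2 p hsubrep hsup
    exact absurd (this ▸ trivial : t ∈ p) htp
end kerK

end S5

namespace S5

section conj
variable {k : Type} [Field k] {G : Type} [Group G] (N : Subgroup G) [N.Normal]

/-- conjugation by `g` on the group algebra of `N` -/
def conjA (g : G) : MonoidAlgebra k ↥N →ₐ[k] MonoidAlgebra k ↥N :=
  MonoidAlgebra.mapDomainAlgHom k k (MulAut.conjNormal g).toMonoidHom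

theorem conjA_single (g : G) (u : ↥N) (r : k) :
    conjA N g (MonoidAlgebra.single u r) = MonoidAlgebra.single (MulAut.conjNormal g u) r := by
  simp [conjA, MonoidAlgebra.mapDomainAlgHom_apply, Finsupp.mapDomain_single]

theorem conjA_eq_domCongr (g : G) (x : MonoidAlgebra k ↥N) :
    conjA N g x = MonoidAlgebra.domCongr k k ((MulAut.conjNormal g : MulAut ↥N) : ↥N ≃* ↥N) x := by
  induction x using MonoidAlgebra.induction_on with
  | of u =>
      rw [show MonoidAlgebra.of k ↥N u = MonoidAlgebra.single u 1 from rfl, conjA_single,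
        MonoidAlgebra.domCongr_single]
  | add a b ha hb => rw [map_add, map_add, ha, hb]
  | smul r a ha => rw [map_smul, map_smul, ha]

theorem conjA_jac (g : G) {x : MonoidAlgebra k ↥N}
    (hx : x ∈ (⊥ : Ideal (MonoidAlgebra k ↥N)).jacobson) :
    conjA N g x ∈ (⊥ : Ideal (MonoidAlgebra k ↥N)).jacobson := by
  rw [conjA_eq_domCongr]
  set e := (MonoidAlgebra.domCongr k k ((MulAut.conjNormal g : MulAut ↥N) : ↥N ≃* ↥N)).toRingEquiv
  refine Submodule.mem_sInf.2 fun m hm => ?_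
  have hmax : (Ideal.comap (e : MonoidAlgebra k ↥N →+* MonoidAlgebra k ↥N) m).IsMaximal :=
    haveI := hm.2
    Ideal.comap_isMaximal_of_surjective _ e.surjective
  have hle : (⊥ : Ideal (MonoidAlgebra k ↥N)).jacobson ≤
      Ideal.comap (e : MonoidAlgebra k ↥N →+* MonoidAlgebra k ↥N) m :=
    sInf_le ⟨bot_le, hmax⟩
  exact hle hx

theorem conjA_comp (g h : G) (c : MonoidAlgebra k ↥N) :
    conjA N g (conjA N h c) = conjA N (g * h) c := by
  induction c using MonoidAlgebra.induction_on with
  | of u =>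
      rw [show MonoidAlgebra.of k ↥N u = MonoidAlgebra.single u 1 from rfl, conjA_single,
        conjA_single, conjA_single]
      congr 1
      rw [map_mul]
      rfl
  | add a b ha hb => rw [map_add, map_add, map_add, ha, hb]
  | smul r a ha => rw [map_smul, map_smul, map_smul, ha]

theorem of_mul_conjA (u : ↥N) (c : MonoidAlgebra k ↥N) :
    MonoidAlgebra.of k ↥N u * c = conjA N (↑u : G) c * MonoidAlgebra.of k ↥N u := by
  induction c using MonoidAlgebra.induction_on with
  | of v =>
      rw [show MonoidAlgebra.of k ↥N v = MonoidAlgebra.single v 1 from rfl, conjA_single]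
      rw [show MonoidAlgebra.of k ↥N u = MonoidAlgebra.single u 1 from rfl]
      rw [MonoidAlgebra.single_mul_single, MonoidAlgebra.single_mul_single]
      congr 1
      ext
      simp [MulAut.conjNormal_apply, mul_assoc]
  | add a b ha hb => rw [mul_add, map_add, add_mul, ha, hb]
  | smul r a ha => rw [mul_smul_comm, map_smul, smul_mul_assoc, ha]
end conj

end S5

theorem S5.conjA_pow_mem (k : Type) [Field k] (G : Type) [Group G] [Fintype G]
    (N : Subgroup G) [N.Normal] (g : G) (m : ℕ) {x : MonoidAlgebra k ↥N}
    (hx : x ∈ Jrad k G N ^ m) : S5.conjA N g x ∈ Jrad k G N ^ m := by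
  induction m generalizing x with
  | zero =>
      rw [pow_zero] at hx ⊢
      rw [Submodule.one_eq_span] at hx ⊢
      obtain ⟨r, hr⟩ := Submodule.mem_span_singleton.1 hx
      rw [← hr, map_smul, map_one]
      exact Submodule.smul_mem _ r (Submodule.mem_span_singleton_self 1)
  | succ m ih =>
      rw [pow_succ'] at hx ⊢
      refine Submodule.mul_induction_on hx (fun a ha b hb => ?_) (fun a b hca hcb => ?_)
      · rw [map_mul]
        exact Submodule.mul_mem_mul (S5.conjA_jac N g ha) (ih hb)
      · rw [map_add]; exact Submodule.add_mem _ hca hcb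

theorem S5.Jpow_lmul (k : Type) [Field k] (G : Type) [Group G] [Fintype G]
    (N : Subgroup G) [N.Normal] (m : ℕ) (c : MonoidAlgebra k ↥N) :
    ∀ x ∈ Jrad k G N ^ (m + 1), c * x ∈ Jrad k G N ^ (m + 1) := by
  rw [pow_succ']
  intro x hx
  refine Submodule.mul_induction_on hx (fun a ha b hb => ?_) (fun a b hca hcb => ?_)
  · rw [← mul_assoc]
    refine Submodule.mul_mem_mul ?_ hb
    exact ((⊥ : Ideal (MonoidAlgebra k ↥N)).jacobson).smul_mem c ha
  · rw [mul_add]; exact Submodule.add_mem _ hca hcb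

section S5main
open S5

variable {T L : Type} [AddCommGroup L] [Module k L] [AddCommGroup T] [Module k T]
variable (ρL : Representation k G L) (ρT : Representation k ↥N T) (π : T →ₗ[k] L)

theorem S5actSpan_eq (P : Submodule k (MonoidAlgebra k ↥N)) :
    actSpan k ρT P = oSpan ρT P ⊤ := by
  refine le_antisymm (span_le.2 ?_) (span_le.2 ?_)
  · rintro w ⟨x, hx, v, rfl⟩; exact subset_span ⟨x, hx, v, trivial, rfl⟩
  · rintro w ⟨x, hx, v, _, rfl⟩; exact subset_span ⟨x, hx, v, rfl⟩

theorem S5Tn0 : oSpan ρT ((Jrad k G N) ^ 0) ⊤ = ⊤ := by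
  rw [eq_top_iff]
  intro w _
  have h1 : (1 : MonoidAlgebra k ↥N) ∈ Jrad k G N ^ 0 := by
    rw [pow_zero]; exact Submodule.one_le.1 le_rfl
  have := mem_oSpan (ρ := ρT) h1 (Submodule.mem_top (x := w))
  rwa [map_one, Module.End.one_apply] at this

theorem S5stab (m : ℕ) (c : MonoidAlgebra k ↥N) {v : T}
    (hv : v ∈ oSpan ρT (Jrad k G N ^ m) ⊤) :
    ρT.asAlgebraHom c v ∈ oSpan ρT (Jrad k G N ^ m) ⊤ := by
  cases m with
  | zero => rw [S5Tn0]; trivial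
  | succ m =>
      exact oSpan_smul_mem (fun c x hx => S5.Jpow_lmul k G N m c x hx) c hv

theorem S5rhoT_conj (u : ↥N) (c : MonoidAlgebra k ↥N) (t : T) :
    ρT u (ρT.asAlgebraHom c t) = ρT.asAlgebraHom (conjA N (↑u : G) c) (ρT u t) := by
  calc ρT u (ρT.asAlgebraHom c t) = ρT.asAlgebraHom (MonoidAlgebra.of k ↥N u * c) t := by
        rw [map_mul, Module.End.mul_apply, Representation.asAlgebraHom_of]
  _ = ρT.asAlgebraHom (conjA N (↑u : G) c * MonoidAlgebra.of k ↥N u) t := by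
        rw [of_mul_conjA]
  _ = ρT.asAlgebraHom (conjA N (↑u : G) c) (ρT u t) := by
        rw [map_mul, Module.End.mul_apply, Representation.asAlgebraHom_of]

theorem S5philift (hcov : IsProjectiveCover k ρT (ρL.comp N.subtype) π) (g : G) :
    ∃ l : T →ₗ[k] T,
      IsEquivariant k ρT (ρT.comp (MulAut.conjNormal g).toMonoidHom) l ∧
      ∀ t, π (l t) = ρL g (π t) := by
  have hfequi : IsEquivariant k (ρT.comp (MulAut.conjNormal g).toMonoidHom)
      (ρL.comp N.subtype) ((ρL g⁻¹) ∘ₗ π) := by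
    intro m a
    show ρL g⁻¹ (π (ρT (MulAut.conjNormal g m) a)) = ρL ↑m (ρL g⁻¹ (π a))
    rw [hcov.2.1 (MulAut.conjNormal g m) a]
    show ρL g⁻¹ (ρL ↑(MulAut.conjNormal g m) (π a)) = _
    rw [← Module.End.mul_apply (ρL g⁻¹), ← map_mul, ← Module.End.mul_apply (ρL ↑m), ← map_mul,
      MulAut.conjNormal_apply]
    rw [show g⁻¹ * (g * ↑m * g⁻¹) = ↑m * g⁻¹ by group]
  have hfsurj : Function.Surjective ((ρL g⁻¹) ∘ₗ π) := by
    intro y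
    obtain ⟨x, hx⟩ := hcov.2.2.1 (ρL g y)
    refine ⟨x, ?_⟩
    show ρL g⁻¹ (π x) = y
    rw [hx, ← Module.End.mul_apply, ← map_mul, inv_mul_cancel, map_one, Module.End.one_apply]
  obtain ⟨l, hl1, hl2⟩ := hcov.1 T L _ _ _ hfequi hfsurj π hcov.2.1
  refine ⟨l, hl1, fun t => ?_⟩
  have h0 := LinearMap.congr_fun hl2 t
  simp only [LinearMap.comp_apply] at h0
  -- h0 : ρL g⁻¹ (π (l t)) = π t
  have h2 : ρL g (ρL g⁻¹ (π (l t))) = ρL g (π t) := by rw [h0]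
  rwa [← Module.End.mul_apply, ← map_mul, mul_inv_cancel, map_one, Module.End.one_apply] at h2

def S5phi (hcov : IsProjectiveCover k ρT (ρL.comp N.subtype) π) (g : G) : T →ₗ[k] T :=
  @ite _ (g = 1) (Classical.propDecidable _) LinearMap.id
    (S5philift k G N ρL ρT π hcov g).choose

theorem S5phi_one (hcov : IsProjectiveCover k ρT (ρL.comp N.subtype) π) :
    S5phi k G N ρL ρT π hcov 1 = LinearMap.id := by
  simp [S5phi]

theorem S5phi_equi (hcov : IsProjectiveCover k ρT (ρL.comp N.subtype) π) (g : G) (u : ↥N)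
    (t : T) : S5phi k G N ρL ρT π hcov g (ρT u t) =
      ρT (MulAut.conjNormal g u) (S5phi k G N ρL ρT π hcov g t) := by
  by_cases h : g = 1
  · subst h
    rw [S5phi_one]
    simp only [LinearMap.id_apply, map_one, MulAut.one_apply]
  · simp only [S5phi]; rw [if_neg h]
    exact (S5philift k G N ρL ρT π hcov g).choose_spec.1 u t

theorem S5phi_pi (hcov : IsProjectiveCover k ρT (ρL.comp N.subtype) π) (g : G) (t : T) :
    π (S5phi k G N ρL ρT π hcov g t) = ρL g (π t) := by
  by_cases h : g = 1
  · subst h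
    rw [S5phi_one]
    simp only [LinearMap.id_apply, map_one, Module.End.one_apply]
  · simp only [S5phi]; rw [if_neg h]
    exact (S5philift k G N ρL ρT π hcov g).choose_spec.2 t

theorem S5phi_asAlg (hcov : IsProjectiveCover k ρT (ρL.comp N.subtype) π) (g : G)
    (c : MonoidAlgebra k ↥N) (t : T) :
    S5phi k G N ρL ρT π hcov g (ρT.asAlgebraHom c t) =
      ρT.asAlgebraHom (conjA N g c) (S5phi k G N ρL ρT π hcov g t) := by
  have hequi : IsEquivariant k ρT (ρT.comp (MulAut.conjNormal g).toMonoidHom)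
      (S5phi k G N ρL ρT π hcov g) := fun u t => S5phi_equi k G N ρL ρT π hcov g u t
  have h := asAlg_equivariant hequi c t
  rw [h, ← asAlg_comp]
  rfl

theorem S5delta (hcov : IsProjectiveCover k ρT (ρL.comp N.subtype) π) (g₀ : G)
    (ψ₁ ψ₂ : T →ₗ[k] T)
    (h1 : ∀ c t, ψ₁ (ρT.asAlgebraHom c t) = ρT.asAlgebraHom (conjA N g₀ c) (ψ₁ t))
    (h2 : ∀ c t, ψ₂ (ρT.asAlgebraHom c t) = ρT.asAlgebraHom (conjA N g₀ c) (ψ₂ t))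
    (hπ : ∀ t, π (ψ₁ t) = π (ψ₂ t)) (n : ℕ) {v : T}
    (hv : v ∈ oSpan ρT (Jrad k G N ^ n) ⊤) :
    ψ₁ v - ψ₂ v ∈ oSpan ρT (Jrad k G N ^ (n + 1)) ⊤ := by
  have hK : LinearMap.ker π ≤ oSpan ρT (Jrad k G N) ⊤ :=
    ker_le_JT ρT (ρL.comp N.subtype) π hcov
  have step : ψ₁ v - ψ₂ v ∈ oSpan ρT (Jrad k G N ^ n) (LinearMap.ker π) := by
    refine oSpan_induction
      (C := fun u => ψ₁ u - ψ₂ u ∈ oSpan ρT (Jrad k G N ^ n) (LinearMap.ker π)) hv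
      (fun x hx w hw => ?_) ?_ (fun a b ha hb => ?_) (fun r a ha => ?_)
    · rw [h1, h2, ← map_sub]
      refine mem_oSpan (S5.conjA_pow_mem k G N g₀ n hx) ?_
      rw [LinearMap.mem_ker, map_sub, hπ, sub_self]
    · simp
    · have e : ψ₁ (a + b) - ψ₂ (a + b) = (ψ₁ a - ψ₂ a) + (ψ₁ b - ψ₂ b) := by
        rw [map_add, map_add]; abel
      rw [e]; exact add_mem ha hb
    · have e : ψ₁ (r • a) - ψ₂ (r • a) = r • (ψ₁ a - ψ₂ a) := by
        rw [map_smul, map_smul, smul_sub]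
      rw [e]; exact smul_mem _ r ha
  have hle : oSpan ρT (Jrad k G N ^ n) (LinearMap.ker π) ≤
      oSpan ρT (Jrad k G N ^ (n + 1)) ⊤ := by
    refine le_trans (oSpan_mono hK) ?_
    rw [← oSpan_mul, ← pow_succ]
  exact hle step

theorem S5incl_of (u : ↥N) :
    incl k G N (MonoidAlgebra.of k ↥N u) = MonoidAlgebra.of k G (↑u : G) := by
  show MonoidAlgebra.mapDomainAlgHom k k N.subtype (MonoidAlgebra.of k ↥N u) = _
  rw [MonoidAlgebra.mapDomainAlgHom_apply, MonoidAlgebra.of_apply, MonoidAlgebra.mapDomain_single]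
  rfl

end S5main

theorem stmt5 (L T : Type)
    [AddCommGroup L] [Module k L] [FiniteDimensional k L]
    [AddCommGroup T] [Module k T]
    (ρL : Representation k G L)
    (hirr : IsIrreducibleRep k (ρL.comp N.subtype : Representation k ↥N L))
    (ρT : Representation k ↥N T) (π : T →ₗ[k] L)
    (hcov : IsProjectiveCover k ρT (ρL.comp N.subtype : Representation k ↥N L) π)
    (n : ℕ) :
    ∃ σ : Representation k G
        (QuotMod k (actSpan k ρT (Jrad k G N ^ n)) (actSpan k ρT (Jrad k G N ^ (n + 1)))),
      (∀ (c : MonoidAlgebra k ↥N) (v w : ↥(actSpan k ρT (Jrad k G N ^ n))),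
          (w : T) = ρT.asAlgebraHom c (v : T) →
          σ.asAlgebraHom (incl k G N c) (Submodule.Quotient.mk v) =
            Submodule.Quotient.mk w) ∧
      (∀ x ∈ Igen k G N, σ.asAlgebraHom x = 0) ∧
      (n = 0 →
        ∃ e : QuotMod k (actSpan k ρT (Jrad k G N ^ n))
              (actSpan k ρT (Jrad k G N ^ (n + 1))) ≃ₗ[k] L,
          ∀ (g : G)
              (w : QuotMod k (actSpan k ρT (Jrad k G N ^ n))
                (actSpan k ρT (Jrad k G N ^ (n + 1)))),
            e (σ g w) = ρL g (e w)) := by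
  classical
  open S5 in
  have hPn : ∀ m : ℕ, actSpan k ρT (Jrad k G N ^ m) = S5.oSpan ρT (Jrad k G N ^ m) ⊤ :=
    fun m => S5actSpan_eq k G N ρT _
  set Pn := actSpan k ρT (Jrad k G N ^ n) with hPdef
  set Pn1 := actSpan k ρT (Jrad k G N ^ (n + 1)) with hP1def
  set φ := S5phi k G N ρL ρT π hcov with hφdef
  have hφTn : ∀ (g : G) (m : ℕ), ∀ v ∈ actSpan k ρT (Jrad k G N ^ m),
      φ g v ∈ actSpan k ρT (Jrad k G N ^ m) := by
    intro g m v hv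
    rw [hPn m] at hv ⊢
    refine S5.oSpan_induction (C := fun u => φ g u ∈ S5.oSpan ρT (Jrad k G N ^ m) ⊤) hv
      (fun x hx w hw => ?_) ?_ (fun a b ha hb => ?_) (fun r a ha => ?_)
    · rw [hφdef, S5phi_asAlg]
      exact S5.mem_oSpan (S5.conjA_pow_mem k G N g m hx) trivial
    · simp
    · rw [map_add]; exact add_mem ha hb
    · rw [map_smul]; exact smul_mem _ r ha
  have hPnPn : ∀ g : G, ∀ v ∈ Pn, φ g v ∈ Pn := by
    intro g v hv; rw [hPdef] at hv ⊢; exact hφTn g n v hv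
  let res : G → (↥Pn →ₗ[k] ↥Pn) := fun g => (φ g).restrict (hPnPn g)
  have hres : ∀ g (v : ↥Pn), ((res g v : ↥Pn) : T) = φ g (v : T) := fun g v => rfl
  have hcond : ∀ g : G, Submodule.comap Pn.subtype Pn1 ≤
      Submodule.comap (res g) (Submodule.comap Pn.subtype Pn1) := by
    intro g v hv
    have hv' : ((v : ↥Pn) : T) ∈ Pn1 := hv
    show ((res g v : ↥Pn) : T) ∈ Pn1
    rw [hres, hP1def]
    rw [hP1def] at hv'
    exact hφTn g (n + 1) _ hv'
  let qm : G → (QuotMod k Pn Pn1 →ₗ[k] QuotMod k Pn Pn1) := fun g =>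
    Submodule.mapQ _ _ (res g) (hcond g)
  have hqm_mk : ∀ g (v : ↥Pn),
      qm g (Submodule.Quotient.mk v) = Submodule.Quotient.mk (res g v) := by
    intro g v
    rfl
  have hmk_eq : ∀ (v w : ↥Pn), (v : T) - (w : T) ∈ Pn1 →
      (Submodule.Quotient.mk v : QuotMod k Pn Pn1) = Submodule.Quotient.mk w := by
    intro v w h
    rw [Submodule.Quotient.eq]
    show ((v - w : ↥Pn) : T) ∈ Pn1
    rw [Submodule.coe_sub]
    exact h
  have hvmem : ∀ v : ↥Pn, (v : T) ∈ S5.oSpan ρT (Jrad k G N ^ n) ⊤ := by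
    intro v
    rw [← hPn n]
    exact v.2
  let σ : Representation k G (QuotMod k Pn Pn1) :=
    { toFun := qm
      map_one' := by
        refine LinearMap.ext fun w => ?_
        obtain ⟨v, rfl⟩ := Submodule.Quotient.mk_surjective _ w
        rw [hqm_mk, Module.End.one_apply]
        refine congrArg _ (Subtype.ext ?_)
        rw [hres, hφdef, S5phi_one]
        rfl
      map_mul' := fun g h => by
        refine LinearMap.ext fun w => ?_
        obtain ⟨v, rfl⟩ := Submodule.Quotient.mk_surjective _ w
        rw [Module.End.mul_apply, hqm_mk, hqm_mk, hqm_mk]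
        refine hmk_eq _ _ ?_
        rw [hres, hres, hres, hP1def, hPn (n + 1)]
        have h1 : ∀ c t, φ (g * h) (ρT.asAlgebraHom c t) =
            ρT.asAlgebraHom (S5.conjA N (g * h) c) (φ (g * h) t) := by
          intro c t; rw [hφdef]; exact S5phi_asAlg k G N ρL ρT π hcov (g * h) c t
        have h2 : ∀ c t, (φ g ∘ₗ φ h) (ρT.asAlgebraHom c t) =
            ρT.asAlgebraHom (S5.conjA N (g * h) c) ((φ g ∘ₗ φ h) t) := by
          intro c t
          simp only [LinearMap.comp_apply]
          rw [hφdef, S5phi_asAlg, S5phi_asAlg, S5.conjA_comp]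
        have hπeq : ∀ t, π (φ (g * h) t) = π ((φ g ∘ₗ φ h) t) := by
          intro t
          simp only [LinearMap.comp_apply]
          rw [hφdef, S5phi_pi, S5phi_pi, S5phi_pi, map_mul, Module.End.mul_apply]
        have hd := S5delta k G N ρL ρT π hcov (g * h) (φ (g * h)) ((φ g) ∘ₗ (φ h))
          h1 h2 hπeq n (hvmem v)
        have e : φ (g * h) (v : T) - (φ g ∘ₗ φ h) (v : T) =
            φ (g * h) (v : T) - φ g (φ h (v : T)) := rfl
        rw [e] at hd
        exact hd }
  have hσ_apply : ∀ g : G, σ g = qm g := fun g => rfl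
  have hstab : ∀ (c : MonoidAlgebra k ↥N) (v : ↥Pn), ρT.asAlgebraHom c (v : T) ∈ Pn := by
    intro c v
    have h := S5stab k G N ρT n c (hvmem v)
    rw [← hPn n] at h
    exact h
  have hkey : ∀ (c : MonoidAlgebra k ↥N) (v : ↥Pn),
      σ.asAlgebraHom (incl k G N c) (Submodule.Quotient.mk v) =
        Submodule.Quotient.mk (⟨ρT.asAlgebraHom c (v : T), hstab c v⟩ : ↥Pn) := by
    intro c
    induction c using MonoidAlgebra.induction_on with
    | of u =>
        intro v
        rw [S5incl_of k G N u, Representation.asAlgebraHom_of]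
        rw [hσ_apply, hqm_mk]
        refine hmk_eq _ _ ?_
        rw [hres, hP1def, hPn (n + 1)]
        have h1 : ∀ c t, φ (↑u : G) (ρT.asAlgebraHom c t) =
            ρT.asAlgebraHom (S5.conjA N (↑u : G) c) (φ (↑u : G) t) := by
          intro c t; rw [hφdef]; exact S5phi_asAlg k G N ρL ρT π hcov _ c t
        have h2 : ∀ c t, (ρT u) (ρT.asAlgebraHom c t) =
            ρT.asAlgebraHom (S5.conjA N (↑u : G) c) ((ρT u) t) := by
          intro c t; exact S5rhoT_conj k G N ρT u c t
        have hπeq : ∀ t, π (φ (↑u : G) t) = π ((ρT u) t) := by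
          intro t
          rw [hφdef, S5phi_pi]
          exact (hcov.2.1 u t).symm
        have hd := S5delta k G N ρL ρT π hcov (↑u : G) (φ (↑u : G)) (ρT u)
          h1 h2 hπeq n (hvmem v)
        have : (⟨ρT.asAlgebraHom (MonoidAlgebra.of k ↥N u) (v : T), hstab _ v⟩ : ↥Pn) =
            (⟨ρT u (v : T), by rw [← Representation.asAlgebraHom_of ρT u]; exact hstab _ v⟩ :
              ↥Pn) := by
          refine Subtype.ext ?_
          show ρT.asAlgebraHom (MonoidAlgebra.of k ↥N u) (v : T) = ρT u (v : T)
          rw [Representation.asAlgebraHom_of]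
        rw [this]
        exact hd
    | add a b ha hb =>
        intro v
        rw [map_add, map_add, LinearMap.add_apply, ha v, hb v, ← Submodule.Quotient.mk_add]
        refine congrArg _ (Subtype.ext ?_)
        show ρT.asAlgebraHom a (v : T) + ρT.asAlgebraHom b (v : T) =
          ρT.asAlgebraHom (a + b) (v : T)
        rw [map_add, LinearMap.add_apply]
    | smul r a ha =>
        intro v
        rw [map_smul, map_smul, LinearMap.smul_apply, ha v, ← Submodule.Quotient.mk_smul]
        refine congrArg _ (Subtype.ext ?_)
        show r • ρT.asAlgebraHom a (v : T) = ρT.asAlgebraHom (r • a) (v : T)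
        rw [map_smul, LinearMap.smul_apply]
  refine ⟨σ, ?_, ?_, ?_⟩
  · -- extends the kN-structure
    intro c v w hw
    rw [hkey c v]
    exact congrArg _ (Subtype.ext hw.symm)
  · -- I acts as zero
    have hRzero : ∀ j ∈ Jrad k G N, σ.asAlgebraHom (incl k G N j) = 0 := by
      intro j hj
      refine LinearMap.ext fun w => ?_
      obtain ⟨v, rfl⟩ := Submodule.Quotient.mk_surjective _ w
      rw [hkey j v, LinearMap.zero_apply, Submodule.Quotient.mk_eq_zero]
      show ρT.asAlgebraHom j (v : T) ∈ Pn1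
      rw [hP1def, hPn (n + 1), pow_succ', S5.oSpan_mul]
      exact S5.mem_oSpan hj (hvmem v)
    have hR : ∀ x ∈ Rimg k G N, σ.asAlgebraHom x = 0 := by
      rintro x ⟨j, hj, rfl⟩
      exact hRzero j hj
    intro x hx
    refine Submodule.mul_induction_on hx (fun y hy z hz => ?_) (fun a b ha hb => ?_)
    · have hy0 : σ.asAlgebraHom y = 0 := by
        refine Submodule.mul_induction_on hy (fun a _ r hr => ?_) (fun a b ha hb => ?_)
        · rw [map_mul, hR r hr, mul_zero]
        · rw [map_add, ha, hb, add_zero]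
      rw [map_mul, hy0, zero_mul]
    · rw [map_add, ha, hb, add_zero]
  · -- n = 0 : the quotient is L
    intro hn
    subst hn
    have hker_le : Pn1 ≤ LinearMap.ker π := by
      rw [hP1def, hPn 1]
      refine S5.oSpan_le fun x hx w _ => ?_
      rw [LinearMap.mem_ker]
      have := S5.asAlg_equivariant hcov.2.1 x w
      rw [this]
      refine S5.jac_kills hirr x ?_ (π w)
      rw [pow_one] at hx
      exact hx
    have hle_ker : LinearMap.ker π ≤ Pn1 := by
      rw [hP1def, hPn 1, pow_one]
      exact S5.ker_le_JT ρT (ρL.comp N.subtype) π hcov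
    let pr : ↥Pn →ₗ[k] L := π ∘ₗ Pn.subtype
    have hprle : Submodule.comap Pn.subtype Pn1 ≤ LinearMap.ker pr := by
      intro v hv
      have hv' : ((v : ↥Pn) : T) ∈ Pn1 := hv
      rw [LinearMap.mem_ker]
      show π ((v : ↥Pn) : T) = 0
      exact hker_le hv'
    let lift : QuotMod k Pn Pn1 →ₗ[k] L := Submodule.liftQ _ pr hprle
    have hlift_mk : ∀ v : ↥Pn, lift (Submodule.Quotient.mk v) = π (v : T) := by
      intro v
      exact Submodule.liftQ_apply _ pr v
    have hinj : Function.Injective lift := by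
      rw [← LinearMap.ker_eq_bot]
      rw [eq_bot_iff]
      intro q hq
      obtain ⟨v, rfl⟩ := Submodule.Quotient.mk_surjective _ q
      rw [LinearMap.mem_ker, hlift_mk] at hq
      rw [Submodule.mem_bot, Submodule.Quotient.mk_eq_zero]
      show ((v : ↥Pn) : T) ∈ Pn1
      exact hle_ker hq
    have hsurjl : Function.Surjective lift := by
      intro y
      obtain ⟨t, ht⟩ := hcov.2.2.1 y
      have hmemt : t ∈ Pn := by
        rw [hPdef, hPn 0, S5Tn0 k G N ρT]
        trivial
      exact ⟨Submodule.Quotient.mk ⟨t, hmemt⟩, by rw [hlift_mk]; exact ht⟩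
    refine ⟨LinearEquiv.ofBijective lift (show Function.Bijective lift from ⟨hinj, hsurjl⟩), ?_⟩
    intro g w
    obtain ⟨v, rfl⟩ := Submodule.Quotient.mk_surjective _ w
    rw [LinearEquiv.ofBijective_apply, LinearEquiv.ofBijective_apply]
    rw [hσ_apply, hqm_mk, hlift_mk, hlift_mk, hres, hφdef]
    exact S5phi_pi k G N ρL ρT π hcov g (v : T)

end
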